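/- The φ-quasi cyclic code C̄_{ā,b̄} = { (f·ā mod φ₁, f·b̄ mod φ₂) : f ∈ F_q[x]/⟨φ₁φ₂/φ₃⟩ } has F_q-dimension equal to deg h̄, where h̄ = φ₁φ₂/(φ₃·ḡ) with ḡ = gcd(ā, φ₁/φ₃)·gcd(b̄, φ₂/φ₃)·gcd(ā, b̄, φ₃). -/
import Mathlib


open Polynomial

section Aux

variable {F : Type} [Field F] [DecidableEq F]

omit [DecidableEq F] in
private lemma assocDeg {p q : Polynomial F} (h : Associated p q) : p.natDegree = q.natDegree :=
  natDegree_eq_of_degree_eq (degree_eq_degree_of_associated h)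

private lemma egcd_assoc (p q : Polynomial F) :
    Associated (EuclideanDomain.gcd p q) (gcd p q) :=
  associated_of_dvd_dvd
    (dvd_gcd (EuclideanDomain.gcd_dvd_left _ _) (EuclideanDomain.gcd_dvd_right _ _))
    (EuclideanDomain.dvd_gcd (gcd_dvd_left _ _) (gcd_dvd_right _ _))

private lemma gcd_congr {x x' y y' : Polynomial F} (hx : Associated x x') (hy : Associated y y') :
    Associated (gcd x y) (gcd x' y') :=
  associated_of_dvd_dvd
    (dvd_gcd ((gcd_dvd_left x y).trans hx.dvd) ((gcd_dvd_right x y).trans hy.dvd))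
    (dvd_gcd ((gcd_dvd_left x' y').trans hx.symm.dvd) ((gcd_dvd_right x' y').trans hy.symm.dvd))

/-- For nonzero `p`, `p ∣ f * a ↔ (p / gcd p a) ∣ f`. -/
private lemma dvd_mul_iff_compl {p a k f : Polynomial F} (h0 : p ≠ 0)
    (hk : p = gcd p a * k) : p ∣ f * a ↔ k ∣ f := by
  have hd0 : gcd p a ≠ 0 := fun hz => h0 ((gcd_eq_zero_iff p a).mp hz).1
  constructor
  · intro hpf
    have h1 : p ∣ gcd (f * p) (f * a) := dvd_gcd (dvd_mul_left p f) hpf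
    rw [gcd_mul_left] at h1
    have h2 : gcd p a * k ∣ gcd p a * normalize f := by
      rw [← hk, mul_comm (gcd p a) (normalize f)]; exact h1
    have h3 : k ∣ normalize f := (mul_dvd_mul_iff_left hd0).mp h2
    exact h3.trans (normalize_associated f).dvd
  · intro hkf
    calc p = gcd p a * k := hk
    _ ∣ a * f := mul_dvd_mul (gcd_dvd_right p a) hkf
    _ = f * a := mul_comm _ _

/-- gcd distributes over coprime factors (up to associates). -/
private lemma gcd_mul_distrib_coprime {u v a : Polynomial F} (hc : IsCoprime u v) :
    Associated (gcd (u * v) a) (gcd u a * gcd v a) := by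
  refine associated_of_dvd_dvd ?_ ?_
  · obtain ⟨x, y, hxu, hyv, hxy⟩ := exists_dvd_and_dvd_of_dvd_mul (gcd_dvd_left (u * v) a)
    have hxa : x ∣ a := (Dvd.intro y hxy.symm).trans (gcd_dvd_right _ _)
    have hya : y ∣ a := (Dvd.intro_left x hxy.symm).trans (gcd_dvd_right _ _)
    rw [hxy]
    exact mul_dvd_mul (dvd_gcd hxu hxa) (dvd_gcd hyv hya)
  · refine dvd_gcd (mul_dvd_mul (gcd_dvd_left u a) (gcd_dvd_left v a)) ?_
    have hcc : IsCoprime (gcd u a) (gcd v a) :=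
      (hc.of_isCoprime_of_dvd_left (gcd_dvd_left u a)).of_isCoprime_of_dvd_right
        (gcd_dvd_left v a)
    exact hcc.mul_dvd (gcd_dvd_right u a) (gcd_dvd_right v a)

/-- A coprime factor can be cancelled inside a gcd. -/
private lemma gcd_cancel_coprime {x y q : Polynomial F} (hc : IsCoprime x q) :
    Associated (gcd (x * y) q) (gcd y q) := by
  refine associated_of_dvd_dvd ?_ (dvd_gcd ((gcd_dvd_left y q).trans (dvd_mul_left y x))
    (gcd_dvd_right y q))
  have h1 : IsCoprime (gcd (x * y) q) x :=
    hc.symm.of_isCoprime_of_dvd_left (gcd_dvd_right (x * y) q)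
  exact dvd_gcd (h1.dvd_of_dvd_mul_left (gcd_dvd_left (x * y) q)) (gcd_dvd_right _ _)

/-- key counting lemma: `s·t·gcd(p/s, p/t)` is associated to `p·gcd(s,t)`. -/
private lemma compl_gcd {p s s' t t' : Polynomial F} (hp : p ≠ 0)
    (hs : p = s * s') (ht : p = t * t') :
    Associated (s * t * gcd s' t') (p * gcd s t) := by
  have hs0 : s ≠ 0 := fun hz => hp (by rw [hs, hz, zero_mul])
  have ht0 : t ≠ 0 := fun hz => hp (by rw [ht, hz, zero_mul])
  have hl : lcm s t ∣ p := lcm_dvd ⟨s', hs⟩ ⟨t', ht⟩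
  obtain ⟨r, hr⟩ := hl
  have hl0 : lcm s t ≠ 0 := fun hz => ((lcm_eq_zero_iff s t).mp hz).elim hs0 ht0
  have hrs' : r ∣ s' := by
    obtain ⟨m, hm⟩ := dvd_lcm_left s t
    have : s * s' = s * (m * r) := by rw [← hs, hr, hm, mul_assoc]
    exact Dvd.intro_left m (mul_left_cancel₀ hs0 this).symm
  have hrt' : r ∣ t' := by
    obtain ⟨m, hm⟩ := dvd_lcm_right s t
    have : t * t' = t * (m * r) := by rw [← ht, hr, hm, mul_assoc]
    exact Dvd.intro_left m (mul_left_cancel₀ ht0 this).symm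
  have h2 : gcd s' t' ∣ r := by
    have hcs : gcd s' t' * s ∣ p := by
      rw [hs, mul_comm (gcd s' t') s]
      exact mul_dvd_mul_left s (gcd_dvd_left _ _)
    have hct : gcd s' t' * t ∣ p := by
      rw [ht, mul_comm (gcd s' t') t]
      exact mul_dvd_mul_left t (gcd_dvd_right _ _)
    have h3 : normalize (gcd s' t') * lcm s t ∣ p := by
      rw [← lcm_mul_left]
      exact lcm_dvd hcs hct
    rw [normalize_gcd] at h3
    have h4 : lcm s t * gcd s' t' ∣ lcm s t * r := by
      rwa [mul_comm, ← hr]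
    exact (mul_dvd_mul_iff_left hl0).mp h4
  have hcr : Associated (gcd s' t') r := associated_of_dvd_dvd h2 (dvd_gcd hrs' hrt')
  have key : Associated (s * t * gcd s' t') (gcd s t * lcm s t * r) :=
    (gcd_mul_lcm s t).symm.mul_mul hcr
  have : gcd s t * lcm s t * r = p * gcd s t := by rw [mul_assoc, ← hr, mul_comm]
  rwa [this] at key

omit [DecidableEq F] in
private lemma assocNeZero {p q : Polynomial F} (h : Associated p q) (hp : p ≠ 0) : q ≠ 0 := by
  obtain ⟨v, hv⟩ := h
  exact fun hz => hp (by
    have h2 := hv.trans hz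
    rcases mul_eq_zero.mp h2 with h1 | h1
    · exact h1
    · exact absurd h1 v.ne_zero)

end Aux

/-- The φ-quasi cyclic code `C̄_{ā,b̄} = {(f·ā mod φ₁, f·b̄ mod φ₂) : f ∈ F_q[x]/⟨φ₁φ₂/φ₃⟩}`
has `F_q`-dimension equal to `deg h̄`, where `h̄ = φ₁φ₂/(φ₃·ḡ)` with
`ḡ = gcd(ā, φ₁/φ₃)·gcd(b̄, φ₂/φ₃)·gcd(ā, b̄, φ₃)` and `φ₃ = gcd(φ₁, φ₂)`. -/
theorem quasiCyclic_code_finrank (F : Type) [Field F] [Fintype F] [DecidableEq F]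
    (φ₁ φ₂ : Polynomial F) (hm₁ : φ₁.Monic) (hm₂ : φ₂.Monic)
    (hsq₁ : Squarefree φ₁) (hsq₂ : Squarefree φ₂)
    (φ₃ : Polynomial F) (hφ₃ : φ₃ = EuclideanDomain.gcd φ₁ φ₂)
    (a b : Polynomial F)
    (g : Polynomial F)
    (hg : g = EuclideanDomain.gcd a (φ₁ / φ₃) * EuclideanDomain.gcd b (φ₂ / φ₃) *
      EuclideanDomain.gcd (EuclideanDomain.gcd a b) φ₃)
    (h : Polynomial F) (hh : h = φ₁ * φ₂ / (φ₃ * g)) :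
    Module.finrank F
      ↥(Submodule.span F
        {p : AdjoinRoot φ₁ × AdjoinRoot φ₂ |
          ∃ f : Polynomial F, p = (AdjoinRoot.mk φ₁ (f * a), AdjoinRoot.mk φ₂ (f * b))}) =
      h.natDegree := by
  classical
  have hφ₁0 : φ₁ ≠ 0 := hm₁.ne_zero
  have hφ₂0 : φ₂ ≠ 0 := hm₂.ne_zero
  have hφ₃1 : φ₃ ∣ φ₁ := hφ₃ ▸ EuclideanDomain.gcd_dvd_left _ _
  have hφ₃2 : φ₃ ∣ φ₂ := hφ₃ ▸ EuclideanDomain.gcd_dvd_right _ _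
  have hφ₃0 : φ₃ ≠ 0 := fun hz => hφ₁0 (zero_dvd_iff.mp (hz ▸ hφ₃1))
  set u := φ₁ / φ₃ with hu
  set w := φ₂ / φ₃ with hw
  have hu1 : φ₃ * u = φ₁ := EuclideanDomain.mul_div_cancel' hφ₃0 hφ₃1
  have hw1 : φ₃ * w = φ₂ := EuclideanDomain.mul_div_cancel' hφ₃0 hφ₃2
  have hu0 : u ≠ 0 := fun hz => hφ₁0 (by rw [← hu1, hz, mul_zero])
  have hw0 : w ≠ 0 := fun hz => hφ₂0 (by rw [← hw1, hz, mul_zero])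
  -- coprimality facts
  have hc_u3 : IsCoprime u φ₃ :=
    IsRelPrime.isCoprime fun d hdu hd3 => hsq₁ d (hu1 ▸ mul_dvd_mul hd3 hdu)
  have hc_w3 : IsCoprime w φ₃ :=
    IsRelPrime.isCoprime fun d hdw hd3 => hsq₂ d (hw1 ▸ mul_dvd_mul hd3 hdw)
  have hc_uw : IsCoprime u w := by
    refine IsRelPrime.isCoprime fun d hdu hdw => hc_u3.isRelPrime hdu ?_
    have hd1 : d ∣ φ₁ := hdu.trans (Dvd.intro_left φ₃ hu1)
    have hd2 : d ∣ φ₂ := hdw.trans (Dvd.intro_left φ₃ hw1)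
    exact hφ₃ ▸ EuclideanDomain.dvd_gcd hd1 hd2
  -- gcd abbreviations
  set dA := gcd φ₁ a with hdA
  set dB := gcd φ₂ b with hdB
  set gA := gcd u a with hgA
  set gB := gcd w b with hgB
  set s := gcd φ₃ a with hs
  set t := gcd φ₃ b with ht
  obtain ⟨k₁, hk₁⟩ : dA ∣ φ₁ := gcd_dvd_left φ₁ a
  obtain ⟨k₂, hk₂⟩ : dB ∣ φ₂ := gcd_dvd_left φ₂ b
  obtain ⟨s', hs'⟩ : s ∣ φ₃ := gcd_dvd_left φ₃ a
  obtain ⟨t', ht'⟩ : t ∣ φ₃ := gcd_dvd_left φ₃ b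
  obtain ⟨u₁, hu₁⟩ : gA ∣ u := gcd_dvd_left u a
  obtain ⟨w₁, hw₁⟩ : gB ∣ w := gcd_dvd_left w b
  -- nonzeroness
  have hdA0 : dA ≠ 0 := fun hz => hφ₁0 ((gcd_eq_zero_iff φ₁ a).mp hz).1
  have hdB0 : dB ≠ 0 := fun hz => hφ₂0 ((gcd_eq_zero_iff φ₂ b).mp hz).1
  have hgA0 : gA ≠ 0 := fun hz => hu0 ((gcd_eq_zero_iff u a).mp hz).1
  have hgB0 : gB ≠ 0 := fun hz => hw0 ((gcd_eq_zero_iff w b).mp hz).1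
  have hs0 : s ≠ 0 := fun hz => hφ₃0 ((gcd_eq_zero_iff φ₃ a).mp hz).1
  have ht0 : t ≠ 0 := fun hz => hφ₃0 ((gcd_eq_zero_iff φ₃ b).mp hz).1
  have hk₁0 : k₁ ≠ 0 := fun hz => hφ₁0 (by rw [hk₁, hz, mul_zero])
  have hk₂0 : k₂ ≠ 0 := fun hz => hφ₂0 (by rw [hk₂, hz, mul_zero])
  have hs'0 : s' ≠ 0 := fun hz => hφ₃0 (by rw [hs', hz, mul_zero])
  have ht'0 : t' ≠ 0 := fun hz => hφ₃0 (by rw [ht', hz, mul_zero])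
  have hu₁0 : u₁ ≠ 0 := fun hz => hu0 (by rw [hu₁, hz, mul_zero])
  have hw₁0 : w₁ ≠ 0 := fun hz => hw0 (by rw [hw₁, hz, mul_zero])
  -- the linear map
  let ψ : Polynomial F →ₗ[F] AdjoinRoot φ₁ × AdjoinRoot φ₂ :=
    { toFun := fun f => (AdjoinRoot.mk φ₁ (f * a), AdjoinRoot.mk φ₂ (f * b))
      map_add' := by intros; simp [add_mul]
      map_smul' := by
        intros c f
        simp only [RingHom.id_apply, Prod.smul_mk, smul_mul_assoc, AdjoinRoot.smul_mk] }
  have hset : {p : AdjoinRoot φ₁ × AdjoinRoot φ₂ |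
      ∃ f : Polynomial F, p = (AdjoinRoot.mk φ₁ (f * a), AdjoinRoot.mk φ₂ (f * b))} =
      (LinearMap.range ψ : Set (AdjoinRoot φ₁ × AdjoinRoot φ₂)) := by
    ext p
    constructor
    · rintro ⟨f, rfl⟩; exact ⟨f, rfl⟩
    · rintro ⟨f, rfl⟩; exact ⟨f, rfl⟩
  rw [hset, Submodule.span_eq]
  -- the kernel
  set K : Polynomial F := lcm k₁ k₂ with hK
  have hK0 : K ≠ 0 := fun hz => ((lcm_eq_zero_iff k₁ k₂).mp hz).elim hk₁0 hk₂0
  have hker : LinearMap.ker ψ = (Ideal.span {K}).restrictScalars F := by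
    ext f
    have hψf : ψ f = (AdjoinRoot.mk φ₁ (f * a), AdjoinRoot.mk φ₂ (f * b)) := rfl
    simp only [LinearMap.mem_ker, Submodule.restrictScalars_mem, Ideal.mem_span_singleton,
      hψf, Prod.mk_eq_zero, AdjoinRoot.mk_eq_zero]
    rw [dvd_mul_iff_compl hφ₁0 hk₁, dvd_mul_iff_compl hφ₂0 hk₂]
    exact ⟨fun ⟨h1, h2⟩ => lcm_dvd h1 h2,
      fun hKf => ⟨(dvd_lcm_left k₁ k₂).trans hKf, (dvd_lcm_right k₁ k₂).trans hKf⟩⟩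
  -- finrank of the range equals natDegree K
  have hrank : Module.finrank F (LinearMap.range ψ) = K.natDegree := by
    have e1 := ψ.quotKerEquivRange
    have e2 : (Polynomial F ⧸ LinearMap.ker ψ) ≃ₗ[F] AdjoinRoot K :=
      (Submodule.quotEquivOfEq _ _ hker).trans
        (Submodule.Quotient.restrictScalarsEquiv F (Ideal.span {K}))
    rw [← e1.finrank_eq, e2.finrank_eq, (AdjoinRoot.powerBasis hK0).finrank]
    rfl
  rw [hrank]
  -- now the degree computation
  set eA := EuclideanDomain.gcd a u with heAdef
  set eB := EuclideanDomain.gcd b w with heBdef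
  set eC := EuclideanDomain.gcd (EuclideanDomain.gcd a b) φ₃ with heCdef
  have heA : Associated eA gA := by rw [heAdef, hgA, gcd_comm u a]; exact egcd_assoc a u
  have heB : Associated eB gB := by rw [heBdef, hgB, gcd_comm w b]; exact egcd_assoc b w
  have heC : Associated eC (gcd s t) := by
    refine associated_of_dvd_dvd ?_ ?_
    · refine dvd_gcd (dvd_gcd (EuclideanDomain.gcd_dvd_right _ _)
        ((EuclideanDomain.gcd_dvd_left _ _).trans (EuclideanDomain.gcd_dvd_left a b)))
        (dvd_gcd (EuclideanDomain.gcd_dvd_right _ _)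
        ((EuclideanDomain.gcd_dvd_left _ _).trans (EuclideanDomain.gcd_dvd_right a b)))
    · refine EuclideanDomain.dvd_gcd (EuclideanDomain.dvd_gcd
        ((gcd_dvd_left s t).trans (gcd_dvd_right φ₃ a))
        ((gcd_dvd_right s t).trans (gcd_dvd_right φ₃ b)))
        ((gcd_dvd_left s t).trans (gcd_dvd_left φ₃ a))
  have heA0 : eA ≠ 0 := assocNeZero heA.symm hgA0
  have heB0 : eB ≠ 0 := assocNeZero heB.symm hgB0
  have hst0 : gcd s t ≠ 0 := fun hz => hs0 ((gcd_eq_zero_iff s t).mp hz).1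
  have heC0 : eC ≠ 0 := assocNeZero heC.symm hst0
  have hg0 : g ≠ 0 := by
    rw [hg]
    exact mul_ne_zero (mul_ne_zero heA0 heB0) heC0
  -- A1
  have hprod : φ₁ * φ₂ = φ₃ * (u * w * φ₃) := by rw [← hu1, ← hw1]; ring
  have hgdvd : g ∣ u * w * φ₃ := by
    rw [hg]
    exact mul_dvd_mul (mul_dvd_mul (EuclideanDomain.gcd_dvd_right a u)
      (EuclideanDomain.gcd_dvd_right b w)) (EuclideanDomain.gcd_dvd_right _ _)
  have hdvd : φ₃ * g ∣ φ₁ * φ₂ := by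
    rw [hprod]
    exact mul_dvd_mul_left φ₃ hgdvd
  have hφ₃g0 : φ₃ * g ≠ 0 := mul_ne_zero hφ₃0 hg0
  have hmd : (φ₃ * g) * h = φ₁ * φ₂ := by
    rw [hh]; exact EuclideanDomain.mul_div_cancel' hφ₃g0 hdvd
  have hh0 : h ≠ 0 := fun hz => (mul_ne_zero hφ₁0 hφ₂0) (by rw [← hmd, hz, mul_zero])
  have hA1 : (φ₃ * g).natDegree + h.natDegree = φ₁.natDegree + φ₂.natDegree := by
    rw [← natDegree_mul hφ₃g0 hh0, hmd, natDegree_mul hφ₁0 hφ₂0]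
  have hA1' : (φ₃ * g).natDegree = φ₃.natDegree + eA.natDegree + eB.natDegree + eC.natDegree := by
    rw [natDegree_mul hφ₃0 hg0, hg, natDegree_mul (mul_ne_zero heA0 heB0) heC0,
      natDegree_mul heA0 heB0]
    ring
  -- A2
  have hgk0 : gcd k₁ k₂ ≠ 0 := fun hz => hk₁0 ((gcd_eq_zero_iff k₁ k₂).mp hz).1
  have hA2 : (gcd k₁ k₂).natDegree + K.natDegree = k₁.natDegree + k₂.natDegree := by
    have := assocDeg (gcd_mul_lcm k₁ k₂)
    rwa [natDegree_mul hgk0 hK0, natDegree_mul hk₁0 hk₂0] at this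
  -- A3, A4
  have hA3 : dA.natDegree + k₁.natDegree = φ₁.natDegree := by
    rw [← natDegree_mul hdA0 hk₁0, ← hk₁]
  have hA4 : dB.natDegree + k₂.natDegree = φ₂.natDegree := by
    rw [← natDegree_mul hdB0 hk₂0, ← hk₂]
  -- A5, A6
  have hdAassoc : Associated dA (gA * s) := by
    have h5 : Associated (gcd (u * φ₃) a) (gcd u a * gcd φ₃ a) := gcd_mul_distrib_coprime hc_u3
    rw [hdA, ← hu1, mul_comm φ₃ u]
    exact h5
  have hA5 : dA.natDegree = gA.natDegree + s.natDegree := by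
    rw [assocDeg hdAassoc, natDegree_mul hgA0 hs0]
  have hdBassoc : Associated dB (gB * t) := by
    have h5 : Associated (gcd (w * φ₃) b) (gcd w b * gcd φ₃ b) := gcd_mul_distrib_coprime hc_w3
    rw [hdB, ← hw1, mul_comm φ₃ w]
    exact h5
  have hA6 : dB.natDegree = gB.natDegree + t.natDegree := by
    rw [assocDeg hdBassoc, natDegree_mul hgB0 ht0]
  -- A10 : gcd k₁ k₂ associated to gcd s' t'
  have hk₁assoc : Associated k₁ (u₁ * s') := by
    have he : dA * k₁ = (gA * s) * (u₁ * s') := by rw [← hk₁, ← hu1, hu₁, hs']; ring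
    have hx : Associated (dA * k₁) ((gA * s) * (u₁ * s')) := by
      rw [← he]
    exact hx.of_mul_left hdAassoc hdA0
  have hk₂assoc : Associated k₂ (w₁ * t') := by
    have he : dB * k₂ = (gB * t) * (w₁ * t') := by rw [← hk₂, ← hw1, hw₁, ht']; ring
    have hx : Associated (dB * k₂) ((gB * t) * (w₁ * t')) := by
      rw [← he]
    exact hx.of_mul_left hdBassoc hdB0
  have hu₁u : u₁ ∣ u := Dvd.intro_left gA hu₁.symm
  have hw₁w : w₁ ∣ w := Dvd.intro_left gB hw₁.symm
  have hs'3 : s' ∣ φ₃ := Dvd.intro_left s hs'.symm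
  have ht'3 : t' ∣ φ₃ := Dvd.intro_left t ht'.symm
  have hcop1 : IsCoprime u₁ (w₁ * t') :=
    ((hc_uw.mul_right hc_u3).of_isCoprime_of_dvd_left hu₁u).of_isCoprime_of_dvd_right
      (mul_dvd_mul hw₁w ht'3)
  have hcop2 : IsCoprime w₁ s' :=
    (hc_w3.of_isCoprime_of_dvd_left hw₁w).of_isCoprime_of_dvd_right hs'3
  have hDassoc : Associated (gcd k₁ k₂) (gcd s' t') := by
    have st1 : Associated (gcd k₁ k₂) (gcd (u₁ * s') (w₁ * t')) := gcd_congr hk₁assoc hk₂assoc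
    have st2 : Associated (gcd (u₁ * s') (w₁ * t')) (gcd (w₁ * t') s') := by
      rw [gcd_comm (w₁ * t') s']
      exact gcd_cancel_coprime hcop1
    have st3 : Associated (gcd (w₁ * t') s') (gcd t' s') := gcd_cancel_coprime hcop2
    rw [gcd_comm s' t']
    exact st1.trans (st2.trans st3)
  -- A11
  have hs't'0 : gcd s' t' ≠ 0 := fun hz => hs'0 ((gcd_eq_zero_iff s' t').mp hz).1
  have hA11 : s.natDegree + t.natDegree + (gcd s' t').natDegree =
      φ₃.natDegree + (gcd s t).natDegree := by
    have := assocDeg (compl_gcd hφ₃0 hs' ht')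
    rwa [natDegree_mul (mul_ne_zero hs0 ht0) hs't'0, natDegree_mul hs0 ht0,
      natDegree_mul hφ₃0 hst0] at this
  -- final accounting
  have hA10 : (gcd k₁ k₂).natDegree = (gcd s' t').natDegree := assocDeg hDassoc
  have heAd : eA.natDegree = gA.natDegree := assocDeg heA
  have heBd : eB.natDegree = gB.natDegree := assocDeg heB
  have heCd : eC.natDegree = (gcd s t).natDegree := assocDeg heC
  omega
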